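/- Let K ⊆ M ⊆ L be a tower of difference fields (i.e., M, K are difference subfields of L). Then: (1) if M/K and L/M are transformally separable, then L/K is transformally separable; (2) if L/K is transformally separable, then M/K is transformally separable; (3) L/K is transformally separable if and only if for every finite tuple a of elements of L the difference subfield of L generated by K and a is transformally separable over K; (4) if Ω is a difference field containing L, K₀ is a difference subfield of Ω containing K which is linearly disjoint from L over K, and L₀ is the difference subfield of Ω generated by L and K₀, then L/K is transformally separable if and only if L₀/K₀ is transformally separable. -/

import Mathlib

/-! STATEMENT 2: basic properties of transformally separable extensions of
difference fields (composition, downward closure, finite character, invariance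
under base extension), all inside an ambient difference field `(Ω, σ)`. -/

/-- A finite tuple `b` of elements of `Ω` is linearly independent over the subfield `A`. -/
def LinIndepOver {Ω : Type*} [Field Ω] (A : Subfield Ω) {n : ℕ} (b : Fin n → Ω) : Prop :=
  ∀ c : Fin n → Ω, (∀ i, c i ∈ A) → (∑ i, c i * b i) = 0 → ∀ i, c i = 0

/-- Subfields `B` and `C` of `Ω` are linearly disjoint over `A`. -/
def LinDisjOver {Ω : Type*} [Field Ω] (A B C : Subfield Ω) : Prop :=
  ∀ (n : ℕ) (b : Fin n → Ω), (∀ i, b i ∈ B) → LinIndepOver A b → LinIndepOver C b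

/-- The extension `L/K` of difference subfields of `(Ω, σ)` is transformally separable:
`K` and `σ(L)` are linearly disjoint over `σ(K)`. -/
def TransSepOver {Ω : Type*} [Field Ω] (σ : Ω →+* Ω) (K L : Subfield Ω) : Prop :=
  LinDisjOver (K.map σ) K (L.map σ)

/-- The difference subfield generated by a difference subfield `K` and a tuple `a`. -/
def DiffGen {Ω : Type*} [Field Ω] (σ : Ω →+* Ω) (K : Subfield Ω)
    {d : ℕ} (a : Fin d → Ω) : Subfield Ω :=
  K ⊔ Subfield.closure {y | ∃ (i : Fin d) (n : ℕ), y = (⇑σ)^[n] (a i)}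

section Aux

variable {Ω : Type*} [Field Ω]

/-- `w` is an `A`-linear combination of the tuple `u`. -/
def InSpanAux (A : Subfield Ω) {m : ℕ} (u : Fin m → Ω) (w : Ω) : Prop :=
  ∃ c : Fin m → Ω, (∀ j, c j ∈ A) ∧ w = ∑ j, c j * u j

theorem LinIndepOver.mono {A A' : Subfield Ω} {n : ℕ} {b : Fin n → Ω} (h : A' ≤ A)
    (hb : LinIndepOver A b) : LinIndepOver A' b :=
  fun c hc => hb c fun i => h (hc i)

theorem LinDisjOver.mono_right {A B C C' : Subfield Ω} (h : C' ≤ C)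
    (hd : LinDisjOver A B C) : LinDisjOver A B C' :=
  fun n b hb hbi => (hd n b hb hbi).mono h

theorem LinDisjOver.mono_left {A B B' C : Subfield Ω} (h : B' ≤ B)
    (hd : LinDisjOver A B C) : LinDisjOver A B' C :=
  fun n b hb hbi => hd n b (fun i => h (hb i)) hbi

theorem subfield_map_mono {σ : Ω →+* Ω} {A B : Subfield Ω} (h : A ≤ B) :
    A.map σ ≤ B.map σ := by
  rintro _ ⟨x, hx, rfl⟩
  exact ⟨x, h hx, rfl⟩

theorem subfield_map_le_self {σ : Ω →+* Ω} {L : Subfield Ω} (hLσ : ∀ x ∈ L, σ x ∈ L) :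
    L.map σ ≤ L := by
  rintro _ ⟨x, hx, rfl⟩
  exact hLσ x hx

/-- Rearranging a double sum of products. -/
theorem sum_mul_span {n m : ℕ} (a : Fin n → Ω) (e : Fin n → Fin m → Ω) (u : Fin m → Ω) :
    ∑ i, a i * (∑ j, e i j * u j) = ∑ j, (∑ i, a i * e i j) * u j := by
  simp_rw [Finset.mul_sum, Finset.sum_mul]
  rw [Finset.sum_comm]
  exact Finset.sum_congr rfl fun j _ => Finset.sum_congr rfl fun i _ => (mul_assoc _ _ _).symm

theorem inSpanAux_append_left {A : Subfield Ω} {m m' : ℕ} {u : Fin m → Ω} (v : Fin m' → Ω)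
    {w : Ω} (h : InSpanAux A u w) : InSpanAux A (Fin.append u v) w := by
  obtain ⟨c, hc, rfl⟩ := h
  refine ⟨Fin.append c 0, ?_, ?_⟩
  · intro j
    refine Fin.addCases (fun i => ?_) (fun i => ?_) j
    · rw [Fin.append_left]; exact hc i
    · rw [Fin.append_right]; exact A.zero_mem
  · rw [Fin.sum_univ_add]
    simp [Fin.append_left, Fin.append_right]

theorem inSpanAux_append_right {A : Subfield Ω} {m m' : ℕ} (u : Fin m → Ω) {v : Fin m' → Ω}
    {w : Ω} (h : InSpanAux A v w) : InSpanAux A (Fin.append u v) w := by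
  obtain ⟨c, hc, rfl⟩ := h
  refine ⟨Fin.append 0 c, ?_, ?_⟩
  · intro j
    refine Fin.addCases (fun i => ?_) (fun i => ?_) j
    · rw [Fin.append_left]; exact A.zero_mem
    · rw [Fin.append_right]; exact hc i
  · rw [Fin.sum_univ_add]
    simp [Fin.append_left, Fin.append_right]

theorem InSpanAux.trans {A B : Subfield Ω} (hAB : A ≤ B) {m p : ℕ} {u : Fin m → Ω}
    {x : Fin p → Ω} (hx : ∀ k, InSpanAux A u (x k)) {w : Ω} (hw : InSpanAux B x w) :
    InSpanAux B u w := by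
  obtain ⟨c, hc, rfl⟩ := hw
  choose f hf hrep using hx
  refine ⟨fun j => ∑ k, c k * f k j, fun j =>
    Subfield.sum_mem _ fun k _ => B.mul_mem (hc k) (hAB (hf k j)), ?_⟩
  calc ∑ k, c k * x k = ∑ k, c k * (∑ j, f k j * u j) :=
        Finset.sum_congr rfl fun k _ => by rw [hrep k]
    _ = ∑ j, (∑ k, c k * f k j) * u j := sum_mul_span _ _ _

/-- From any finite tuple in `B` one can extract an `A`-linearly independent tuple in `B`
spanning it over `A`. -/
theorem exists_indep_span (A B : Subfield Ω) :
    ∀ (n : ℕ) (y : Fin n → Ω), (∀ i, y i ∈ B) →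
      ∃ (m : ℕ) (u : Fin m → Ω), (∀ j, u j ∈ B) ∧ LinIndepOver A u ∧
        ∀ i, InSpanAux A u (y i) := by
  intro n
  induction n with
  | zero =>
    exact fun y _ =>
      ⟨0, fun j => 0, fun j => j.elim0, fun c _ _ i => i.elim0, fun i => i.elim0⟩
  | succ n ih =>
    intro y hy
    obtain ⟨m, u, huB, huI, hspan⟩ := ih (fun i => y i.succ) fun i => hy _
    by_cases h0 : InSpanAux A u (y 0)
    · exact ⟨m, u, huB, huI, fun i => Fin.cases h0 hspan i⟩
    · refine ⟨m + 1, Fin.cons (y 0) u, ?_, ?_, ?_⟩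
      · intro j
        refine Fin.cases ?_ ?_ j
        · simpa using hy 0
        · simpa using huB
      · intro c hc hsum
        rw [Fin.sum_univ_succ] at hsum
        simp only [Fin.cons_zero, Fin.cons_succ] at hsum
        by_cases hc0 : c 0 = 0
        · rw [hc0, zero_mul, zero_add] at hsum
          have htail := huI (fun j => c j.succ) (fun j => hc _) hsum
          intro i
          refine Fin.cases hc0 (fun i => htail i) i
        · exfalso
          apply h0
          refine ⟨fun j => -(c j.succ) / c 0, fun j =>
            A.div_mem (A.neg_mem (hc _)) (hc 0), ?_⟩
          have hsum' : ∑ j, c j.succ * u j = -(c 0 * y 0) :=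
            eq_neg_of_add_eq_zero_right hsum
          have step : ∀ j, -(c j.succ) / c 0 * u j = -(c 0)⁻¹ * (c j.succ * u j) := by
            intro j; rw [div_eq_mul_inv]; ring
          rw [Finset.sum_congr rfl fun j _ => step j, ← Finset.mul_sum, hsum',
            neg_mul_neg, inv_mul_cancel_left₀ hc0]
      · intro i
        refine Fin.cases ?_ ?_ i
        · refine ⟨Fin.cons 1 0, ?_, ?_⟩
          · intro j
            refine Fin.cases ?_ ?_ j
            · simpa using A.one_mem
            · intro k; simpa using A.zero_mem
          · rw [Fin.sum_univ_succ]
            simp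
        · intro k
          obtain ⟨c, hc, hrep⟩ := hspan k
          refine ⟨Fin.cons 0 c, ?_, ?_⟩
          · intro j
            refine Fin.cases ?_ ?_ j
            · simpa using A.zero_mem
            · intro j'; simpa using hc j'
          · rw [Fin.sum_univ_succ]
            simpa using hrep

/-- Linear disjointness is symmetric. -/
theorem LinDisjOver.symm {A B C : Subfield Ω} (hAC : A ≤ C)
    (h : LinDisjOver A B C) : LinDisjOver A C B := by
  intro n y hy hyI x hx hsum
  obtain ⟨m, u, huB, huI, hspan⟩ := exists_indep_span A B n x hx
  choose c hcA hrep using hspan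
  have h1 : ∑ j, (∑ i, y i * c i j) * u j = 0 := by
    rw [← sum_mul_span, ← hsum]
    exact Finset.sum_congr rfl fun i _ => by rw [hrep i, mul_comm]
  have h2 : ∀ j, ∑ i, y i * c i j = 0 :=
    h m u huB huI (fun j => ∑ i, y i * c i j)
      (fun j => Subfield.sum_mem _ fun i _ => C.mul_mem (hy i) (hAC (hcA i j))) h1
  have h3 : ∀ j i, c i j = 0 := by
    intro j
    refine hyI (fun i => c i j) (fun i => hcA i j) ?_
    rw [← h2 j]
    exact Finset.sum_congr rfl fun i _ => mul_comm _ _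
  intro i
  rw [hrep i]
  exact Finset.sum_eq_zero fun j _ => by rw [h3 j i, zero_mul]

/-- Linear disjointness is preserved under an injective endomorphism. -/
theorem LinDisjOver.map {σ : Ω →+* Ω} {A B C : Subfield Ω} (h : LinDisjOver A B C) :
    LinDisjOver (A.map σ) (B.map σ) (C.map σ) := by
  have hinj : Function.Injective σ := σ.injective
  intro n b' hb' hb'I
  choose b hbB hbeq using fun i => Subfield.mem_map.mp (hb' i)
  have hbI : LinIndepOver A b := by
    intro c hc hs i
    have h0 : ∑ i, σ (c i) * b' i = 0 := by
      have : ∑ i, σ (c i) * b' i = σ (∑ i, c i * b i) := by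
        rw [map_sum]
        exact Finset.sum_congr rfl fun i _ => by rw [map_mul, hbeq i]
      rw [this, hs, map_zero]
    have := hb'I (fun i => σ (c i)) (fun i => ⟨c i, hc i, rfl⟩) h0 i
    exact hinj (by rw [this, map_zero])
  have hbC : LinIndepOver C b := h n b hbB hbI
  intro c' hc' hs'
  choose y hyC hyeq using fun i => Subfield.mem_map.mp (hc' i)
  have h0 : ∑ i, y i * b i = 0 := by
    apply hinj
    rw [map_zero, map_sum]
    rw [← hs']
    exact Finset.sum_congr rfl fun i _ => by rw [map_mul, hbeq i, hyeq i]
  intro i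
  rw [← hyeq i, hbC y hyC h0 i, map_zero]

/-- Elements of the subring generated by `X ∪ E` are `E`-combinations of elements of `X`. -/
theorem subring_closure_inSpan (E X : Subfield Ω) {w : Ω}
    (hw : w ∈ Subring.closure ((X : Set Ω) ∪ (E : Set Ω))) :
    ∃ (m : ℕ) (x : Fin m → Ω), (∀ j, x j ∈ X) ∧ InSpanAux E x w := by
  induction hw using Subring.closure_induction with
  | mem z hz =>
    rcases hz with hzX | hzE
    · exact ⟨1, fun _ => z, fun _ => hzX, fun _ => 1, fun _ => E.one_mem, by simp⟩
    · exact ⟨1, fun _ => 1, fun _ => X.one_mem, fun _ => z, fun _ => hzE, by simp⟩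
  | zero =>
    exact ⟨0, fun j => 0, fun j => j.elim0, fun j => 0, fun j => j.elim0, by simp⟩
  | one => exact ⟨1, fun _ => 1, fun _ => X.one_mem, fun _ => 1, fun _ => E.one_mem, by simp⟩
  | add a b ha hb iha ihb =>
    obtain ⟨m₁, x₁, hx₁, c₁, hc₁, hrep₁⟩ := iha
    obtain ⟨m₂, x₂, hx₂, c₂, hc₂, hrep₂⟩ := ihb
    refine ⟨m₁ + m₂, Fin.append x₁ x₂, ?_, Fin.append c₁ c₂, ?_, ?_⟩
    · intro j
      refine Fin.addCases (fun i => ?_) (fun i => ?_) j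
      · rw [Fin.append_left]; exact hx₁ i
      · rw [Fin.append_right]; exact hx₂ i
    · intro j
      refine Fin.addCases (fun i => ?_) (fun i => ?_) j
      · rw [Fin.append_left]; exact hc₁ i
      · rw [Fin.append_right]; exact hc₂ i
    · rw [Fin.sum_univ_add]
      simp only [Fin.append_left, Fin.append_right]
      rw [hrep₁, hrep₂]
  | neg a ha iha =>
    obtain ⟨m, x, hx, c, hc, hrep⟩ := iha
    refine ⟨m, x, hx, fun j => -(c j), fun j => E.neg_mem (hc j), ?_⟩
    rw [hrep, ← Finset.sum_neg_distrib]
    exact Finset.sum_congr rfl fun j _ => by ring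
  | mul a b ha hb iha ihb =>
    obtain ⟨m₁, x₁, hx₁, c₁, hc₁, hrep₁⟩ := iha
    obtain ⟨m₂, x₂, hx₂, c₂, hc₂, hrep₂⟩ := ihb
    refine ⟨m₁ * m₂,
      fun t => x₁ (finProdFinEquiv.symm t).1 * x₂ (finProdFinEquiv.symm t).2,
      fun t => X.mul_mem (hx₁ _) (hx₂ _),
      fun t => c₁ (finProdFinEquiv.symm t).1 * c₂ (finProdFinEquiv.symm t).2,
      fun t => E.mul_mem (hc₁ _) (hc₂ _), ?_⟩
    have key := Equiv.sum_comp (finProdFinEquiv : Fin m₁ × Fin m₂ ≃ Fin (m₁ * m₂))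
      (fun t => c₁ (finProdFinEquiv.symm t).1 * c₂ (finProdFinEquiv.symm t).2 *
        (x₁ (finProdFinEquiv.symm t).1 * x₂ (finProdFinEquiv.symm t).2))
    rw [hrep₁, hrep₂, Fintype.sum_mul_sum, ← key, Fintype.sum_prod_type]
    exact Finset.sum_congr rfl fun i _ => Finset.sum_congr rfl fun j _ => by
      simp only [Equiv.symm_apply_apply]; ring

/-- Elements of the compositum `X ⊔ E` have a common-denominator representation. -/
theorem mem_sup_frac (X E : Subfield Ω) {z : Ω} (hz : z ∈ X ⊔ E) :
    ∃ p q, p ∈ Subring.closure ((X : Set Ω) ∪ (E : Set Ω)) ∧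
      q ∈ Subring.closure ((X : Set Ω) ∪ (E : Set Ω)) ∧ q ≠ 0 ∧ z * q = p := by
  have h1 : X ⊔ E = Subfield.closure ((X : Set Ω) ∪ (E : Set Ω)) := by
    rw [Subfield.closure_union, Subfield.closure_eq, Subfield.closure_eq]
  rw [h1, Subfield.mem_closure_iff] at hz
  obtain ⟨p, hp, q, hq, hpq⟩ := hz
  by_cases hq0 : q = 0
  · refine ⟨0, 1, Subring.zero_mem _, Subring.one_mem _, one_ne_zero, ?_⟩
    rw [← hpq, hq0, div_zero, zero_mul]
  · exact ⟨p, q, hp, hq, hq0, by rw [← hpq, div_mul_cancel₀ _ hq0]⟩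

/-- Combining representations of finitely many elements over a common tuple. -/
theorem rep_common (E X : Subfield Ω) :
    ∀ (n : ℕ) (z : Fin n → Ω),
      (∀ i, ∃ (m : ℕ) (x : Fin m → Ω), (∀ j, x j ∈ X) ∧ InSpanAux E x (z i)) →
      ∃ (m : ℕ) (x : Fin m → Ω), (∀ j, x j ∈ X) ∧ ∀ i, InSpanAux E x (z i) := by
  intro n
  induction n with
  | zero => exact fun z _ => ⟨0, fun j => 0, fun j => j.elim0, fun i => i.elim0⟩
  | succ n ih =>
    intro z hz
    obtain ⟨m, x, hxX, hxs⟩ := ih (fun i => z i.succ) fun i => hz _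
    obtain ⟨m₀, x₀, hx₀X, hx₀s⟩ := hz 0
    refine ⟨m + m₀, Fin.append x x₀, ?_, ?_⟩
    · intro j
      refine Fin.addCases (fun i => ?_) (fun i => ?_) j
      · rw [Fin.append_left]; exact hxX i
      · rw [Fin.append_right]; exact hx₀X i
    · intro i
      refine Fin.cases ?_ ?_ i
      · exact inSpanAux_append_right x hx₀s
      · exact fun k => inSpanAux_append_left x₀ (hxs k)

/-- Vectors with entries in `E` that are linearly independent over `E` remain linearly
independent over any larger subfield `D` (Gaussian elimination). -/
theorem matrix_indep_extend (E D : Subfield Ω) (hED : E ≤ D) {m : ℕ} :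
    ∀ (n : ℕ) (e : Fin n → Fin m → Ω), (∀ i j, e i j ∈ E) →
      (∀ c : Fin n → Ω, (∀ i, c i ∈ E) → (∀ j, ∑ i, c i * e i j = 0) → ∀ i, c i = 0) →
      ∀ d : Fin n → Ω, (∀ i, d i ∈ D) → (∀ j, ∑ i, d i * e i j = 0) → ∀ i, d i = 0 := by
  intro n
  induction n with
  | zero => exact fun e _ _ d _ _ i => i.elim0
  | succ n ih =>
    intro e heE hind d hdD hdrel
    have h0 : ∃ j₀, e 0 j₀ ≠ 0 := by
      by_contra hall
      push_neg at hall
      have hone := hind (fun i => if i = 0 then 1 else 0)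
        (fun i => by split <;> [exact E.one_mem; exact E.zero_mem]) ?_ 0
      · simp at hone
      · intro j
        rw [Fin.sum_univ_succ]
        simp [Fin.succ_ne_zero, hall j]
    obtain ⟨j₀, hj₀⟩ := h0
    set r : Fin n → Ω := fun i => e i.succ j₀ / e 0 j₀ with hr
    have hrE : ∀ i, r i ∈ E := fun i => E.div_mem (heE _ _) (heE _ _)
    set e' : Fin n → Fin m → Ω := fun i j => e i.succ j - r i * e 0 j with he'
    have he'E : ∀ i j, e' i j ∈ E := fun i j =>
      E.sub_mem (heE _ _) (E.mul_mem (hrE i) (heE _ _))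
    have he'j₀ : ∀ i, e' i j₀ = 0 := by
      intro i
      simp only [he', hr]
      rw [div_mul_cancel₀ _ hj₀, sub_self]
    have hind' : ∀ c : Fin n → Ω, (∀ i, c i ∈ E) → (∀ j, ∑ i, c i * e' i j = 0) →
        ∀ i, c i = 0 := by
      intro c hc hrel
      have key : ∀ j, ∑ i : Fin (n + 1),
          (Fin.cons (-(∑ i, c i * r i)) c : Fin (n + 1) → Ω) i * e i j = 0 := by
        intro j
        rw [Fin.sum_univ_succ]
        simp only [Fin.cons_zero, Fin.cons_succ]
        have expand : ∀ i : Fin n, c i * e i.succ j = c i * e' i j + c i * r i * e 0 j := by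
          intro i; simp only [he']; ring
        rw [Finset.sum_congr rfl fun i _ => expand i, Finset.sum_add_distrib, hrel j,
          zero_add, ← Finset.sum_mul]
        ring
      have hz := hind _ (fun i => Fin.cases
        (by simpa using E.neg_mem (Subfield.sum_mem _ fun i _ => E.mul_mem (hc i) (hrE i)))
        (fun i => by simpa using hc i) i) key
      intro i
      have := hz i.succ
      rwa [Fin.cons_succ] at this
    set t := ∑ i, d i.succ * r i with ht
    have key2 : ∀ j, (d 0 + t) * e 0 j + ∑ i, d i.succ * e' i j = 0 := by
      intro j
      have hj := hdrel j
      rw [Fin.sum_univ_succ] at hj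
      have expand : ∀ i : Fin n, d i.succ * e' i j =
          d i.succ * e i.succ j - d i.succ * r i * e 0 j := by
        intro i; simp only [he']; ring
      rw [Finset.sum_congr rfl fun i _ => expand i, Finset.sum_sub_distrib, ← Finset.sum_mul,
        ← ht]
      linear_combination hj
    have hd0t : d 0 + t = 0 := by
      have hk := key2 j₀
      rw [Finset.sum_eq_zero (fun i _ => by rw [he'j₀ i, mul_zero]), add_zero] at hk
      exact (mul_eq_zero.mp hk).resolve_right hj₀
    have hrest : ∀ j, ∑ i, d i.succ * e' i j = 0 := by
      intro j
      have hk := key2 j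
      rw [hd0t, zero_mul, zero_add] at hk
      exact hk
    have hsucc : ∀ i : Fin n, d i.succ = 0 :=
      ih e' he'E hind' (fun i => d i.succ) (fun i => hdD _) hrest
    have ht0 : t = 0 := by
      rw [ht]
      exact Finset.sum_eq_zero fun i _ => by rw [hsucc i, zero_mul]
    intro i
    refine Fin.cases ?_ (fun i => hsucc i) i
    rw [ht0, add_zero] at hd0t
    exact hd0t

/-- The hard half of the tower property for linear disjointness. -/
theorem linDisj_sup_tower {F E D X : Subfield Ω} (hFE : F ≤ E) (hED : E ≤ D) (hFX : F ≤ X)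
    (h : LinDisjOver F X D) : LinDisjOver E (X ⊔ E) D := by
  intro n z hz hzI d hdD hdsum
  choose p q hp hq hq0 hzq using fun i => mem_sup_frac X E (hz i)
  set Q := ∏ i, q i with hQ
  have hQ0 : Q ≠ 0 := Finset.prod_ne_zero_iff.mpr fun i _ => hq0 i
  set z' : Fin n → Ω := fun i => z i * Q with hz'
  have hQR : ∀ i, z' i ∈ Subring.closure ((X : Set Ω) ∪ (E : Set Ω)) := by
    intro i
    have heq : z' i = p i * ∏ k ∈ Finset.univ.erase i, q k := by
      rw [hz']
      dsimp only
      rw [hQ, ← Finset.mul_prod_erase Finset.univ q (Finset.mem_univ i), ← mul_assoc, hzq i]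
    rw [heq]
    exact Subring.mul_mem _ (hp i) (Subring.prod_mem _ fun k _ => hq k)
  have hz'I : LinIndepOver E z' := by
    intro c hc hs i
    refine hzI c hc ?_ i
    have hQs : (∑ i, c i * z i) * Q = 0 := by
      rw [Finset.sum_mul, ← hs]
      exact Finset.sum_congr rfl fun i _ => (mul_assoc _ _ _)
    exact (mul_eq_zero.mp hQs).resolve_right hQ0
  obtain ⟨p', x, hxX, hxspan⟩ :=
    rep_common E X n z' fun i => subring_closure_inSpan E X (hQR i)
  obtain ⟨m, u, huX, huF, huspan⟩ := exists_indep_span F X p' x hxX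
  have hz'span : ∀ i, InSpanAux E u (z' i) := fun i =>
    InSpanAux.trans hFE huspan (hxspan i)
  choose e heE hrep using hz'span
  have huD : LinIndepOver D u := h m u huX huF
  have hrows : ∀ c : Fin n → Ω, (∀ i, c i ∈ E) → (∀ j, ∑ i, c i * e i j = 0) →
      ∀ i, c i = 0 := by
    intro c hc hrel
    refine hz'I c hc ?_
    calc ∑ i, c i * z' i = ∑ i, c i * (∑ j, e i j * u j) :=
          Finset.sum_congr rfl fun i _ => by rw [hrep i]
      _ = ∑ j, (∑ i, c i * e i j) * u j := sum_mul_span _ _ _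
      _ = 0 := Finset.sum_eq_zero fun j _ => by rw [hrel j, zero_mul]
  have hcols : ∀ j, ∑ i, d i * e i j = 0 := by
    have hsum0 : ∑ j, (∑ i, d i * e i j) * u j = 0 := by
      rw [← sum_mul_span]
      calc ∑ i, d i * (∑ j, e i j * u j) = ∑ i, d i * z' i :=
            Finset.sum_congr rfl fun i _ => by rw [hrep i]
        _ = (∑ i, d i * z i) * Q := by
            rw [Finset.sum_mul]
            exact Finset.sum_congr rfl fun i _ => (mul_assoc _ _ _).symm
        _ = 0 := by rw [hdsum, zero_mul]
    exact huD (fun j => ∑ i, d i * e i j)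
      (fun j => Subfield.sum_mem _ fun i _ => D.mul_mem (hdD i) (hED (heE i j))) hsum0
  exact matrix_indep_extend E D hED n e heE hrows d hdD hcols

/-- The easy half of the tower property. -/
theorem linDisj_tower_down {F E D X : Subfield Ω} (h1 : LinDisjOver F X E)
    (h2 : LinDisjOver E (X ⊔ E) D) : LinDisjOver F X D :=
  fun n b hb hbI => h2 n b (fun i => (le_sup_left : X ≤ X ⊔ E) (hb i)) (h1 n b hb hbI)

theorem iter_mem {σ : Ω →+* Ω} {L : Subfield Ω} (hLσ : ∀ x ∈ L, σ x ∈ L) :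
    ∀ (n : ℕ) {x : Ω}, x ∈ L → (⇑σ)^[n] x ∈ L := by
  intro n
  induction n with
  | zero => intro x hx; simpa using hx
  | succ n ih =>
    intro x hx
    rw [Function.iterate_succ_apply']
    exact hLσ _ (ih hx)

end Aux

theorem statement2 {Ω : Type*} [Field Ω] (σ : Ω →+* Ω)
    (K M L : Subfield Ω)
    (hKσ : ∀ x ∈ K, σ x ∈ K) (hMσ : ∀ x ∈ M, σ x ∈ M) (hLσ : ∀ x ∈ L, σ x ∈ L)
    (hKM : K ≤ M) (hML : M ≤ L) :
    -- (1) composition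
    (TransSepOver σ K M → TransSepOver σ M L → TransSepOver σ K L) ∧
    -- (2) downward closure
    (TransSepOver σ K L → TransSepOver σ K M) ∧
    -- (3) finite character
    (TransSepOver σ K L ↔
      ∀ (d : ℕ) (a : Fin d → Ω), (∀ i, a i ∈ L) → TransSepOver σ K (DiffGen σ K a)) ∧
    -- (4) invariance under base extension
    (∀ K₀ : Subfield Ω, (∀ x ∈ K₀, σ x ∈ K₀) → K ≤ K₀ → LinDisjOver K K₀ L →
      (TransSepOver σ K L ↔ TransSepOver σ K₀ (L ⊔ K₀))) := by
  have hKL : K ≤ L := hKM.trans hML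
  refine ⟨?_, ?_, ?_, ?_⟩
  · -- (1)
    intro h1 h2 n b hb hbI
    exact h2 n b (fun i => hKM (hb i)) (h1 n b hb hbI)
  · -- (2)
    intro h
    exact h.mono_right (subfield_map_mono hML)
  · -- (3)
    constructor
    · intro h d a ha
      refine h.mono_right (subfield_map_mono ?_)
      refine sup_le hKL (Subfield.closure_le.mpr ?_)
      rintro y ⟨i, n, rfl⟩
      exact iter_mem hLσ n (ha i)
    · intro h n b hb hbI c' hc' hs'
      choose x hxL hxeq using fun i => Subfield.mem_map.mp (hc' i)
      have hx : ∀ i, x i ∈ DiffGen σ K x := by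
        intro i
        refine (le_sup_right : _ ≤ DiffGen σ K x) (Subfield.subset_closure ?_)
        exact ⟨i, 0, rfl⟩
      exact h n x hxL n b hb hbI c'
        (fun i => ⟨x i, hx i, hxeq i⟩) hs'
  · -- (4)
    intro K₀ hK₀σ hKK₀ hdisj
    have hσK_K : K.map σ ≤ K := subfield_map_le_self hKσ
    have hσK₀_K₀ : K₀.map σ ≤ K₀ := subfield_map_le_self hK₀σ
    have hσL_L : L.map σ ≤ L := subfield_map_le_self hLσ
    have hσKσL : K.map σ ≤ L.map σ := subfield_map_mono hKL
    have hσKσK₀ : K.map σ ≤ K₀.map σ := subfield_map_mono hKK₀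
    have hσK₀σL₀ : K₀.map σ ≤ (L ⊔ K₀).map σ := subfield_map_mono le_sup_right
    have hmap_sup : (L ⊔ K₀).map σ = L.map σ ⊔ K₀.map σ := Subfield.map_sup L K₀ σ
    -- symmetrized linear disjointness hypothesis
    have hdisj' : LinDisjOver K L K₀ := hdisj.symm (hKM.trans hML)
    constructor
    · -- forward
      intro hsep
      have D1 : LinDisjOver (K.map σ) (L.map σ) K := hsep.symm hσKσL
      have D3 : LinDisjOver K (L.map σ ⊔ K) K₀ :=
        hdisj'.mono_left (sup_le hσL_L hKL)
      have D4 : LinDisjOver (K.map σ) (L.map σ) K₀ := linDisj_tower_down D1 D3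
      have D5 : LinDisjOver (K₀.map σ) (L.map σ ⊔ K₀.map σ) K₀ :=
        linDisj_sup_tower hσKσK₀ hσK₀_K₀ hσKσL D4
      have D6 : LinDisjOver (K₀.map σ) K₀ (L.map σ ⊔ K₀.map σ) := D5.symm hσK₀_K₀
      unfold TransSepOver
      rw [hmap_sup]
      exact D6
    · -- backward
      intro hsep₀
      have D1' : LinDisjOver (K₀.map σ) ((L ⊔ K₀).map σ) K₀ := hsep₀.symm hσK₀σL₀
      have D1'' : LinDisjOver (K₀.map σ) (L.map σ ⊔ K₀.map σ) K₀ := by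
        rwa [hmap_sup] at D1'
      have D2 : LinDisjOver (K.map σ) (L.map σ) (K₀.map σ) := hdisj'.map
      have D6 : LinDisjOver (K.map σ) (L.map σ) K₀ := linDisj_tower_down D2 D1''
      have D7 : LinDisjOver (K.map σ) (L.map σ) K := D6.mono_right hKK₀
      exact D7.symm hσK_K
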